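/- Let A ∈ ℝ^{m×n}, b ∈ ℝᵐ, λ > 0, and define the Lasso objective f(x) = ½‖Ax − b‖² + λ‖x‖₁ for x ∈ ℝⁿ. Then the subdifferential mapping T_f = ∂f is a polyhedral multifunction (its graph is the union of finitely many polyhedral convex sets), the set T_f⁻¹(0) of minimizers of f is nonempty, and T_f satisfies the error bound condition for the origin: there exist κ ≥ 0 and ε > 0 such that dist(0, ∂f(x)) ≤ ε implies dist(x, T_f⁻¹(0)) ≤ κ · dist(0, ∂f(x)). -/

import Mathlib

/- STATEMENT 15: for the Lasso objective f(x) = ½‖Ax − b‖² + λ‖x‖₁, the subdifferential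
mapping T_f = ∂f is a polyhedral multifunction, the set of minimizers T_f⁻¹(0) is nonempty,
and T_f satisfies the error bound condition for the origin. -/

open Set Finset

noncomputable section

/-- A set is polyhedral if it is the intersection of finitely many closed half-spaces. -/
def IsPolyhedral {E : Type*} [NormedAddCommGroup E] [NormedSpace ℝ E] (C : Set E) : Prop :=
  ∃ s : Finset ((E →ₗ[ℝ] ℝ) × ℝ), C = {x | ∀ q ∈ s, q.1 x ≤ q.2}

/-- The subdifferential of a real-valued convex function. -/
def RSubdiff {E : Type*} [NormedAddCommGroup E] [InnerProductSpace ℝ E]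
    (f : E → ℝ) (x : E) : Set E :=
  {v | ∀ u : E, f x + (inner ℝ v (u - x) : ℝ) ≤ f u}

/-- The Lasso objective `f(x) = ½‖Ax − b‖² + λ‖x‖₁`. -/
def lassoObj (m n : ℕ) (A : Matrix (Fin m) (Fin n) ℝ) (b : Fin m → ℝ) (lam : ℝ)
    (x : EuclideanSpace ℝ (Fin n)) : ℝ :=
  (1 / 2) * (∑ i, ((∑ j, A i j * x j) - b i) ^ 2) + lam * ∑ j, |x j|

lemma cone_caratheodory {E : Type*} [AddCommGroup E] [Module ℝ E] {ι : Type*} [DecidableEq ι]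
    (a : ι → E) :
    ∀ (t : Finset ι) (z : E), (∃ l : ι → ℝ, (∀ q, 0 ≤ l q) ∧ ∑ q ∈ t, l q • a q = z) →
    ∃ t' : Finset ι, t' ⊆ t ∧ LinearIndependent ℝ (fun q : t' => a q) ∧
      ∃ l : ι → ℝ, (∀ q, 0 ≤ l q) ∧ ∑ q ∈ t', l q • a q = z := by
  intro t
  induction t using Finset.strongInduction with
  | _ t ih =>
    rintro z ⟨l, hl0, hlz⟩
    by_cases hind : LinearIndependent ℝ (fun q : t => a q)
    · exact ⟨t, subset_rfl, hind, l, hl0, hlz⟩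
    · obtain ⟨g, hg0, q1, hq1⟩ := Fintype.not_linearIndependent_iff.mp hind
      -- choose sign c so that the extended relation has a positive coefficient somewhere
      set c : ℝ := if 0 < g q1 then 1 else -1 with hc
      have hcg : 0 < c * g q1 := by
        by_cases h : 0 < g q1
        · simpa [hc, h] using h
        · have : g q1 < 0 := lt_of_le_of_ne (not_lt.mp h) hq1
          simp only [hc, if_neg h]
          nlinarith
      set G : ι → ℝ := fun q => if hq : q ∈ t then c * g ⟨q, hq⟩ else 0 with hG
      have hGsum : ∑ q ∈ t, G q • a q = 0 := by
        rw [← Finset.sum_attach t (fun q => G q • a q)]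
        have : ∀ q : t, G q • a q = c • (g q • a q) := by
          intro q
          simp [hG, q.2, mul_smul]
        rw [Finset.univ_eq_attach] at hg0
        rw [Finset.sum_congr rfl (fun q _ => this q), ← Finset.smul_sum, hg0, smul_zero]
      have hq1mem : (q1 : ι) ∈ t := q1.2
      have hGq1 : 0 < G q1 := by simp [hG, hq1mem]; exact hcg
      set T : Finset ι := t.filter (fun q => 0 < G q) with hT
      have hTne : T.Nonempty := ⟨q1, by simp [hT, hq1mem, hGq1]⟩
      set r : ℝ := T.inf' hTne (fun q => l q / G q) with hr
      have hr0 : 0 ≤ r := by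
        apply Finset.le_inf'
        intro q hq
        have : 0 < G q := (Finset.mem_filter.mp hq).2
        exact div_nonneg (hl0 q) this.le
      obtain ⟨q0, hq0T, hq0⟩ := Finset.exists_mem_eq_inf' hTne (fun q => l q / G q)
      have hq0t : q0 ∈ t := (Finset.mem_filter.mp hq0T).1
      have hGq0 : 0 < G q0 := (Finset.mem_filter.mp hq0T).2
      set l' : ι → ℝ := fun q => if q ∈ t.erase q0 then l q - r * G q else 0 with hl'
      have hl'0 : ∀ q, 0 ≤ l' q := by
        intro q
        simp only [hl']
        split
        · rename_i hqe
          have hqt : q ∈ t := Finset.mem_of_mem_erase hqe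
          by_cases hGq : 0 < G q
          · have hqT : q ∈ T := Finset.mem_filter.mpr ⟨hqt, hGq⟩
            have : r ≤ l q / G q := Finset.inf'_le _ hqT
            have := (le_div_iff₀ hGq).mp this
            linarith
          · have : r * G q ≤ 0 := mul_nonpos_of_nonneg_of_nonpos hr0 (not_lt.mp hGq)
            have := hl0 q
            linarith
        · exact le_rfl
      have hl'sum : ∑ q ∈ t.erase q0, l' q • a q = z := by
        have h1 : ∑ q ∈ t.erase q0, l' q • a q
            = ∑ q ∈ t.erase q0, (l q - r * G q) • a q := by
          apply Finset.sum_congr rfl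
          intro q hq
          simp only [hl', if_pos hq]
        have h2 : ∑ q ∈ t.erase q0, (l q - r * G q) • a q
            = (∑ q ∈ t, (l q - r * G q) • a q) - (l q0 - r * G q0) • a q0 := by
          rw [← Finset.sum_erase_add t _ hq0t]; ring_nf; abel
        have h3 : l q0 - r * G q0 = 0 := by
          have : r = l q0 / G q0 := hq0
          rw [this, div_mul_cancel₀]
          · ring
          · exact hGq0.ne'
        have h4 : ∑ q ∈ t, (l q - r * G q) • a q = z := by
          have : ∀ q ∈ t, (l q - r * G q) • a q = l q • a q - r • (G q • a q) := by
            intro q _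
            rw [sub_smul, smul_smul]
          rw [Finset.sum_congr rfl this, Finset.sum_sub_distrib, ← Finset.smul_sum, hGsum,
            smul_zero, sub_zero, hlz]
        rw [h1, h2, h3, h4, zero_smul, sub_zero]
      obtain ⟨t', ht'sub, ht'ind, hrep⟩ :=
        ih (t.erase q0) (Finset.erase_ssubset hq0t) z ⟨l', hl'0, hl'sum⟩
      exact ⟨t', ht'sub.trans (Finset.erase_subset _ _), ht'ind, hrep⟩

lemma isClosed_cone {E : Type*} [NormedAddCommGroup E] [NormedSpace ℝ E] [FiniteDimensional ℝ E]
    {ι : Type*} [DecidableEq ι] (s : Finset ι) (a : ι → E) :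
    IsClosed {z : E | ∃ l : ι → ℝ, (∀ q, 0 ≤ l q) ∧ ∑ q ∈ s, l q • a q = z} := by
  classical
  have key : {z : E | ∃ l : ι → ℝ, (∀ q, 0 ≤ l q) ∧ ∑ q ∈ s, l q • a q = z}
      = ⋃ t ∈ (s.powerset.filter (fun t : Finset ι => LinearIndependent ℝ (fun q : {x : ι // x ∈ t} => a q)) : Finset _),
        {z : E | ∃ l : ι → ℝ, (∀ q, 0 ≤ l q) ∧ ∑ q ∈ t, l q • a q = z} := by
    ext z
    simp only [Set.mem_iUnion, Finset.mem_filter, Finset.mem_powerset, Set.mem_setOf_eq]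
    constructor
    · rintro hz
      obtain ⟨t', hsub, hind, hrep⟩ := cone_caratheodory a s z hz
      exact ⟨t', ⟨⟨hsub, hind⟩, hrep⟩⟩
    · rintro ⟨t, ⟨hsub, -⟩, l, hl0, hlz⟩
      refine ⟨fun q => if q ∈ t then l q else 0,
        fun q => by by_cases hq : q ∈ t <;> simp [hq, hl0 q], ?_⟩
      rw [← hlz, ← Finset.sum_subset hsub (fun q _ hq => by simp [if_neg hq])]
      exact Finset.sum_congr rfl (fun q hq => by simp only []; rw [if_pos hq])
  rw [key]
  apply Set.Finite.isClosed_biUnion (Finset.finite_toSet _)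
  intro t ht
  have hind : LinearIndependent ℝ (fun q : {x : ι // x ∈ t} => a q) :=
    (Finset.mem_filter.mp (Finset.mem_coe.mp ht)).2
  -- each piece is the image of the nonnegative orthant under an injective linear map
  set T : (({x // x ∈ t}) → ℝ) →ₗ[ℝ] E :=
    { toFun := fun l => ∑ q, l q • a q
      map_add' := by intro u v; simp [add_smul, Finset.sum_add_distrib]
      map_smul' := by intro c u; simp [smul_smul, Finset.smul_sum] } with hTdef
  have himg : {z : E | ∃ l : ι → ℝ, (∀ q, 0 ≤ l q) ∧ ∑ q ∈ t, l q • a q = z}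
      = T '' {l | ∀ q, 0 ≤ l q} := by
    ext z
    simp only [Set.mem_setOf_eq, Set.mem_image, hTdef, LinearMap.coe_mk, AddHom.coe_mk]
    constructor
    · rintro ⟨l, hl0, hlz⟩
      refine ⟨fun q => l q, fun q => hl0 q, ?_⟩
      rw [← hlz]
      show ∑ q : {x // x ∈ t}, l q • a q = _
      rw [← Finset.sum_attach t (fun q => l q • a q), Finset.univ_eq_attach]
    · rintro ⟨l, hl0, hlz⟩
      refine ⟨fun q => if hq : q ∈ t then l ⟨q, hq⟩ else 0, fun q => by
        by_cases hq : q ∈ t <;> simp [hq, hl0 _], ?_⟩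
      rw [← hlz]
      show _ = ∑ q : {x // x ∈ t}, l q • a q
      rw [← Finset.sum_attach t, Finset.univ_eq_attach]
      apply Finset.sum_congr rfl
      intro q _
      simp [q.2]
  rw [himg]
  have hker : LinearMap.ker T = ⊥ := by
    rw [LinearMap.ker_eq_bot']
    intro l hl
    exact funext (Fintype.linearIndependent_iff.mp hind l hl)
  have hclemb := LinearMap.isClosedEmbedding_of_injective hker
  apply hclemb.isClosedMap
  have : {l : {x : ι // x ∈ t} → ℝ | ∀ q, 0 ≤ l q} = ⋂ q, {l : {x : ι // x ∈ t} → ℝ | 0 ≤ l q} := by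
    ext l; simp [Set.mem_iInter]
  rw [this]
  exact isClosed_iInter (fun q => isClosed_le continuous_const (continuous_apply q))

lemma cone_convex {E : Type*} [AddCommGroup E] [Module ℝ E] {ι : Type*} (s : Finset ι) (a : ι → E) :
    Convex ℝ {z : E | ∃ l : ι → ℝ, (∀ q, 0 ≤ l q) ∧ ∑ q ∈ s, l q • a q = z} := by
  rintro x ⟨lx, hlx0, hlx⟩ y ⟨ly, hly0, hly⟩ p q hp hq hpq
  refine ⟨fun i => p * lx i + q * ly i,
    fun i => add_nonneg (mul_nonneg hp (hlx0 i)) (mul_nonneg hq (hly0 i)), ?_⟩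
  rw [Finset.sum_congr rfl (fun i _ => by rw [add_smul, mul_smul, mul_smul]),
    Finset.sum_add_distrib, ← Finset.smul_sum, ← Finset.smul_sum, hlx, hly]

lemma cone_separation {E : Type*} [NormedAddCommGroup E] [NormedSpace ℝ E]
    [FiniteDimensional ℝ E] {ι : Type*} [DecidableEq ι] (s : Finset ι) (a : ι → E) {d : E}
    (hd : d ∉ {z : E | ∃ l : ι → ℝ, (∀ q, 0 ≤ l q) ∧ ∑ q ∈ s, l q • a q = z}) :
    ∃ f : E →L[ℝ] ℝ, (∀ q ∈ s, f (a q) ≤ 0) ∧ 0 < f d := by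
  obtain ⟨f, u, hfK, hfd⟩ :=
    geometric_hahn_banach_closed_point (cone_convex s a) (isClosed_cone s a) hd
  have h0K : (0 : E) ∈ {z : E | ∃ l : ι → ℝ, (∀ q, 0 ≤ l q) ∧ ∑ q ∈ s, l q • a q = z} :=
    ⟨fun _ => 0, fun _ => le_rfl, by simp⟩
  have hu : 0 < u := by simpa using hfK 0 h0K
  refine ⟨f, ?_, hu.trans hfd⟩
  intro q hq
  by_contra h
  push_neg at h
  set t : ℝ := (u + 1) / f (a q) with ht
  have htpos : 0 ≤ t := le_of_lt (div_pos (by linarith) h)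
  have hmem : t • a q ∈ {z : E | ∃ l : ι → ℝ, (∀ q, 0 ≤ l q) ∧ ∑ q ∈ s, l q • a q = z} := by
    refine ⟨fun i => if i = q then t else 0, fun i => by by_cases hi : i = q <;> simp [hi, htpos], ?_⟩
    rw [Finset.sum_congr rfl (fun i _ => by simp only []; rw [ite_smul, zero_smul]),
      Finset.sum_ite_eq' s q (fun i => t • a i), if_pos hq]
  have := hfK _ hmem
  rw [map_smul] at this
  simp only [smul_eq_mul, ht] at this
  rw [div_mul_cancel₀ _ (ne_of_gt h)] at this
  linarith

lemma farkas_infeasible {E : Type*} [NormedAddCommGroup E] [InnerProductSpace ℝ E]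
    [FiniteDimensional ℝ E] [CompleteSpace E] {ι : Type*} [DecidableEq ι]
    (s : Finset ι) (a : ι → E) (c : ι → ℝ)
    (h : {y : E | ∀ q ∈ s, (inner ℝ (a q) y : ℝ) ≤ c q} = ∅) :
    ∃ l : ι → ℝ, (∀ q, 0 ≤ l q) ∧ ∑ q ∈ s, l q • a q = 0 ∧ ∑ q ∈ s, l q * c q < 0 := by
  classical
  -- work in E × ℝ with generators (a q, c q) and (0, 1)
  set b : ι ⊕ Unit → E × ℝ := fun i => Sum.elim (fun q => (a q, c q)) (fun _ => (0, 1)) i with hb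
  set s' : Finset (ι ⊕ Unit) := s.image Sum.inl ∪ {Sum.inr ()} with hs'
  have hmem : ((0 : E), (-1 : ℝ)) ∈
      {z : E × ℝ | ∃ l : ι ⊕ Unit → ℝ, (∀ q, 0 ≤ l q) ∧ ∑ q ∈ s', l q • b q = z} := by
    by_contra hd
    obtain ⟨f, hfK, hfd⟩ := cone_separation s' b hd
    set β : ℝ := f (0, 1) with hβ
    have hβ0 : β ≤ 0 := hfK (Sum.inr ()) (by simp [hs'])
    have hfd' : f (0, -1) = -β := by
      have : ((0 : E), (-1 : ℝ)) = -((0 : E), (1 : ℝ)) := by simp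
      rw [this, map_neg, hβ]
    have hβneg : β < 0 := by
      rw [hfd'] at hfd; linarith
    -- construct a feasible point
    set g : E →L[ℝ] ℝ := f.comp (ContinuousLinearMap.inl ℝ E ℝ) with hg
    have hsplit : ∀ (x : E) (t : ℝ), f (x, t) = g x + t * β := by
      intro x t
      have : ((x : E), (t : ℝ)) = (x, 0) + t • ((0 : E), (1 : ℝ)) := by simp
      rw [this, map_add, map_smul]
      simp [hg, hβ, ContinuousLinearMap.inl]
    set y0 : E := (InnerProductSpace.toDual ℝ E).symm g with hy0
    have hy0app : ∀ z : E, (inner ℝ y0 z : ℝ) = g z := by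
      intro z
      rw [hy0]
      exact InnerProductSpace.toDual_symm_apply
    set y : E := (1 / (-β)) • y0 with hy
    have hyfeas : y ∈ {y : E | ∀ q ∈ s, (inner ℝ (a q) y : ℝ) ≤ c q} := by
      intro q hq
      have h1 : g (a q) + c q * β ≤ 0 := by
        have := hfK (Sum.inl q) (by simp [hs', hq])
        simp only [hb, Sum.elim_inl] at this
        rwa [hsplit] at this
      have h2 : (inner ℝ (a q) y : ℝ) = (1 / (-β)) * g (a q) := by
        rw [hy, real_inner_smul_right, real_inner_comm, hy0app]
      rw [h2]
      rw [div_mul_eq_mul_div, one_mul, div_le_iff₀ (by linarith : (0:ℝ) < -β)]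
      nlinarith
    rw [h] at hyfeas
    exact hyfeas
  obtain ⟨L, hL0, hLsum⟩ := hmem
  refine ⟨fun q => L (Sum.inl q), fun q => hL0 _, ?_, ?_⟩
  · have hdisj : Disjoint (s.image Sum.inl) ({Sum.inr ()} : Finset (ι ⊕ Unit)) := by
      simp [Finset.disjoint_singleton_right]
    have hsum := hLsum
    rw [hs', Finset.sum_union hdisj, Finset.sum_image (fun x _ y _ h => Sum.inl.inj h),
      Finset.sum_singleton] at hsum
    have h1 := congrArg Prod.fst hsum
    simp only [Prod.fst_add, Prod.fst_sum, hb, Sum.elim_inl, Sum.elim_inr, Prod.smul_mk,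
      smul_zero] at h1
    convert h1 using 2 <;> simp
  · have hdisj : Disjoint (s.image Sum.inl) ({Sum.inr ()} : Finset (ι ⊕ Unit)) := by
      simp [Finset.disjoint_singleton_right]
    have hsum := hLsum
    rw [hs', Finset.sum_union hdisj, Finset.sum_image (fun x _ y _ h => Sum.inl.inj h),
      Finset.sum_singleton] at hsum
    have h2 := congrArg Prod.snd hsum
    simp only [Prod.snd_add, Prod.snd_sum, hb, Sum.elim_inl, Sum.elim_inr, Prod.smul_mk,
      smul_eq_mul, mul_one] at h2
    have hLr := hL0 (Sum.inr ())
    have : ∑ q ∈ s, L (Sum.inl q) * c q = -1 - L (Sum.inr ()) := by linarith [h2]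
    calc ∑ q ∈ s, (fun q => L (Sum.inl q)) q * c q = -1 - L (Sum.inr ()) := this
    _ < 0 := by linarith

set_option synthInstance.maxHeartbeats 1000000 in
set_option maxHeartbeats 2000000 in
lemma hoffman {E : Type*} [NormedAddCommGroup E] [InnerProductSpace ℝ E]
    [FiniteDimensional ℝ E] [CompleteSpace E] {ι : Type*} [DecidableEq ι]
    (s : Finset ι) (a : ι → E) (c : ι → ℝ)
    (hne : {z : E | ∀ q ∈ s, (inner ℝ (a q) z : ℝ) ≤ c q}.Nonempty) :
    ∃ κ : ℝ, 0 ≤ κ ∧ ∀ z : E,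
      Metric.infDist z {z : E | ∀ q ∈ s, (inner ℝ (a q) z : ℝ) ≤ c q}
        ≤ κ * ∑ q ∈ s, max ((inner ℝ (a q) z : ℝ) - c q) 0 := by
  classical
  set P : Set E := {z : E | ∀ q ∈ s, (inner ℝ (a q) z : ℝ) ≤ c q} with hP
  have hPclosed : IsClosed P := by
    have : P = ⋂ q ∈ s, {z : E | (inner ℝ (a q) z : ℝ) ≤ c q} := by
      ext z; simp [hP, Set.mem_iInter₂]
    rw [this]
    exact isClosed_biInter (fun q _ => isClosed_le (innerSL ℝ (a q)).continuous continuous_const)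
  have hPconvex : Convex ℝ P := by
    have : P = ⋂ q ∈ s, {z : E | (inner ℝ (a q) z : ℝ) ≤ c q} := by
      ext z; simp [hP, Set.mem_iInter₂]
    rw [this]
    exact convex_iInter₂ (fun q _ => convex_halfSpace_le
      ⟨fun x y => inner_add_right _ _ _, fun r x => real_inner_smul_right _ _ _⟩ (c q))
  -- coefficient bound constants for each linearly independent subfamily
  have hCs : ∀ t : Finset ι, ∃ C : ℝ, 0 ≤ C ∧
      (LinearIndependent ℝ (fun q : {x : ι // x ∈ t} => a q) →
        ∀ l : ι → ℝ, ∀ q ∈ t, |l q| ≤ C * ‖∑ p ∈ t, l p • a p‖) := by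
    intro t
    by_cases hind : LinearIndependent ℝ (fun q : {x : ι // x ∈ t} => a q)
    · set T : (({x : ι // x ∈ t}) → ℝ) →ₗ[ℝ] E :=
        { toFun := fun l => ∑ q, l q • a q
          map_add' := by intro u v; simp [add_smul, Finset.sum_add_distrib]
          map_smul' := by intro r u; simp [smul_smul, Finset.smul_sum] } with hT
      have hker : LinearMap.ker T = ⊥ := by
        rw [LinearMap.ker_eq_bot']
        intro l hl
        exact funext (Fintype.linearIndependent_iff.mp hind l hl)
      have hinj : Function.Injective T := LinearMap.ker_eq_bot.mp hker
      set eqv := LinearEquiv.ofInjective T hinj with heqv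
      set S : LinearMap.range T →L[ℝ] (({x : ι // x ∈ t}) → ℝ) :=
        LinearMap.toContinuousLinearMap eqv.symm.toLinearMap with hS
      refine ⟨‖S‖, norm_nonneg S, fun _ l q hq => ?_⟩
      set l' : {x : ι // x ∈ t} → ℝ := fun p => l p with hl'def
      have hTl' : T l' = ∑ p ∈ t, l p • a p := by
        simp only [hT, LinearMap.coe_mk, AddHom.coe_mk]
        show ∑ p : {x // x ∈ t}, l' p • a p = _
        rw [← Finset.sum_attach t (fun p => l p • a p), Finset.univ_eq_attach]
      have hrange : T l' ∈ LinearMap.range T := ⟨l', rfl⟩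
      have hSval : S ⟨T l', hrange⟩ = l' := by
        have h2 : eqv l' = ⟨T l', hrange⟩ :=
          Subtype.ext (by rw [LinearEquiv.ofInjective_apply])
        rw [hS, ← h2]
        show (LinearMap.toContinuousLinearMap (eqv.symm : _ →ₗ[ℝ] _)) (eqv l') = l'
        simp
      have hbound := S.le_opNorm ⟨T l', hrange⟩
      rw [hSval] at hbound
      calc |l q| = ‖l' ⟨q, hq⟩‖ := by simp [hl'def]
        _ ≤ ‖l'‖ := norm_le_pi_norm l' ⟨q, hq⟩
        _ ≤ ‖S‖ * ‖T l'‖ := hbound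
        _ = ‖S‖ * ‖∑ p ∈ t, l p • a p‖ := by rw [hTl']
    · exact ⟨0, le_rfl, fun h => absurd h hind⟩
  choose C hC0 hC using hCs
  set κ : ℝ := ∑ t ∈ s.powerset, C t with hκ
  have hκ0 : 0 ≤ κ := Finset.sum_nonneg (fun t _ => hC0 t)
  have hCκ : ∀ t ∈ s.powerset, C t ≤ κ := by
    intro t ht
    exact Finset.single_le_sum (fun r _ => hC0 r) ht
  refine ⟨κ, hκ0, fun z => ?_⟩
  set V : ℝ := ∑ q ∈ s, max ((inner ℝ (a q) z : ℝ) - c q) 0 with hV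
  have hV0 : 0 ≤ V := Finset.sum_nonneg (fun q _ => le_max_right _ _)
  by_cases hzP : z ∈ P
  · rw [Metric.infDist_zero_of_mem hzP]
    exact mul_nonneg hκ0 hV0
  -- project z onto P
  obtain ⟨p, hpP, hproj⟩ := exists_norm_eq_iInf_of_complete_convex hne
    (hPclosed.isComplete) hPconvex z
  have hprojchar := (norm_eq_iInf_iff_real_inner_le_zero hPconvex hpP).mp hproj
  set d : E := z - p with hd
  have hdist : Metric.infDist z P ≤ ‖d‖ := by
    rw [hd, ← dist_eq_norm]
    exact Metric.infDist_le_dist_of_mem hpP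
  -- the active constraint set
  set J : Finset ι := s.filter (fun q => (inner ℝ (a q) p : ℝ) = c q) with hJ
  -- d lies in the cone generated by the active constraints
  have hdcone : d ∈ {w : E | ∃ l : ι → ℝ, (∀ q, 0 ≤ l q) ∧ ∑ q ∈ J, l q • a q = w} := by
    by_contra hdK
    obtain ⟨f, hfK, hfd⟩ := cone_separation J a hdK
    set u : E := (InnerProductSpace.toDual ℝ E).symm f with hu
    have huapp : ∀ w : E, (inner ℝ u w : ℝ) = f w := fun w =>
      InnerProductSpace.toDual_symm_apply
    -- choose a small positive step
    set sc : Finset ι := s \ J with hsc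
    set δ : ℝ := if h : sc.Nonempty
      then min 1 (sc.inf' h (fun q => (c q - (inner ℝ (a q) p : ℝ)) / (|(inner ℝ (a q) u : ℝ)| + 1)))
      else 1 with hδ
    have hslack : ∀ q ∈ sc, 0 < c q - (inner ℝ (a q) p : ℝ) := by
      intro q hq
      rw [hsc, Finset.mem_sdiff] at hq
      have h1 := hpP q hq.1
      have h2 : ¬((inner ℝ (a q) p : ℝ) = c q) := by
        intro hcon
        exact hq.2 (Finset.mem_filter.mpr ⟨hq.1, hcon⟩)
      cases lt_or_eq_of_le h1 with
      | inl h => linarith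
      | inr h => exact absurd h h2
    have hδpos : 0 < δ := by
      rw [hδ]
      split
      · rename_i h
        refine lt_min one_pos ?_
        rw [Finset.lt_inf'_iff]
        intro q hq
        exact div_pos (hslack q hq) (by positivity)
      · exact one_pos
    have hmem : p + δ • u ∈ P := by
      intro q hq
      rw [inner_add_right, real_inner_smul_right]
      by_cases hqJ : q ∈ J
      · have h1 : (inner ℝ (a q) p : ℝ) = c q := (Finset.mem_filter.mp hqJ).2
        have h2 : (inner ℝ (a q) u : ℝ) ≤ 0 := by
          rw [real_inner_comm, huapp]
          exact hfK q hqJ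
        nlinarith
      · have hqsc : q ∈ sc := Finset.mem_sdiff.mpr ⟨hq, hqJ⟩
        have h1 : δ ≤ (c q - (inner ℝ (a q) p : ℝ)) / (|(inner ℝ (a q) u : ℝ)| + 1) := by
          have hscne : sc.Nonempty := ⟨q, hqsc⟩
          have hstep : δ ≤ sc.inf' hscne
              (fun q => (c q - (inner ℝ (a q) p : ℝ)) / (|(inner ℝ (a q) u : ℝ)| + 1)) := by
            rw [hδ]
            split
            · exact min_le_right _ _
            · rename_i hno
              exact absurd hscne hno
          exact hstep.trans (Finset.inf'_le _ hqsc)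
        have h2 : δ * (inner ℝ (a q) u : ℝ) ≤ δ * (|(inner ℝ (a q) u : ℝ)| + 1) := by
          apply mul_le_mul_of_nonneg_left _ hδpos.le
          have := le_abs_self (inner ℝ (a q) u : ℝ)
          linarith
        have h3 : δ * (|(inner ℝ (a q) u : ℝ)| + 1) ≤ c q - (inner ℝ (a q) p : ℝ) := by
          rw [← le_div_iff₀ (by positivity)]
          exact h1
        linarith
    have hcontra := hprojchar _ hmem
    rw [add_sub_cancel_left] at hcontra
    rw [real_inner_smul_right] at hcontra
    have : (inner ℝ (z - p) u : ℝ) = f (z - p) := by rw [real_inner_comm, huapp]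
    rw [this] at hcontra
    have : (0:ℝ) < f (z - p) := hfd
    nlinarith
  -- Caratheodory: reduce to an independent subfamily
  obtain ⟨t', ht'J, ht'ind, l, hl0, hlsum⟩ := cone_caratheodory a J d hdcone
  have ht's : t' ⊆ s := ht'J.trans (Finset.filter_subset _ _)
  -- main estimate
  have hmain : ‖d‖ ^ 2 ≤ (C t' * ‖d‖) * V := by
    have h1 : ‖d‖ ^ 2 = (inner ℝ d d : ℝ) := (real_inner_self_eq_norm_sq d).symm
    have h2 : (inner ℝ d d : ℝ) = ∑ q ∈ t', l q * (inner ℝ (a q) d : ℝ) := by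
      nth_rewrite 1 [← hlsum]
      rw [sum_inner]
      exact Finset.sum_congr rfl (fun q _ => by rw [real_inner_smul_left])
    have h3 : ∀ q ∈ t', (inner ℝ (a q) d : ℝ) = (inner ℝ (a q) z : ℝ) - c q := by
      intro q hq
      have hqJ : q ∈ J := ht'J hq
      have : (inner ℝ (a q) p : ℝ) = c q := (Finset.mem_filter.mp hqJ).2
      rw [hd, inner_sub_right, this]
    have h4 : ∀ q ∈ t', l q * ((inner ℝ (a q) z : ℝ) - c q)
        ≤ (C t' * ‖d‖) * max ((inner ℝ (a q) z : ℝ) - c q) 0 := by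
      intro q hq
      have hlq : l q ≤ C t' * ‖d‖ := by
        have := hC t' ht'ind l q hq
        rw [hlsum] at this
        calc l q ≤ |l q| := le_abs_self _
          _ ≤ C t' * ‖d‖ := this
      have hmax : ((inner ℝ (a q) z : ℝ) - c q) ≤ max ((inner ℝ (a q) z : ℝ) - c q) 0 :=
        le_max_left _ _
      by_cases hsign : 0 ≤ (inner ℝ (a q) z : ℝ) - c q
      · calc l q * ((inner ℝ (a q) z : ℝ) - c q)
            ≤ (C t' * ‖d‖) * ((inner ℝ (a q) z : ℝ) - c q) :=
              mul_le_mul_of_nonneg_right hlq hsign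
          _ ≤ (C t' * ‖d‖) * max ((inner ℝ (a q) z : ℝ) - c q) 0 :=
              mul_le_mul_of_nonneg_left hmax (mul_nonneg (hC0 t') (norm_nonneg d))
      · push_neg at hsign
        have : l q * ((inner ℝ (a q) z : ℝ) - c q) ≤ 0 :=
          mul_nonpos_of_nonneg_of_nonpos (hl0 q) hsign.le
        have hmax0 : (0:ℝ) ≤ (C t' * ‖d‖) * max ((inner ℝ (a q) z : ℝ) - c q) 0 :=
          mul_nonneg (mul_nonneg (hC0 t') (norm_nonneg d)) (le_max_right _ _)
        linarith
    calc ‖d‖ ^ 2 = ∑ q ∈ t', l q * (inner ℝ (a q) d : ℝ) := by rw [h1, h2]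
      _ = ∑ q ∈ t', l q * ((inner ℝ (a q) z : ℝ) - c q) :=
          Finset.sum_congr rfl (fun q hq => by rw [h3 q hq])
      _ ≤ ∑ q ∈ t', (C t' * ‖d‖) * max ((inner ℝ (a q) z : ℝ) - c q) 0 :=
          Finset.sum_le_sum h4
      _ ≤ ∑ q ∈ s, (C t' * ‖d‖) * max ((inner ℝ (a q) z : ℝ) - c q) 0 := by
          apply Finset.sum_le_sum_of_subset_of_nonneg ht's
          intro q _ _
          exact mul_nonneg (mul_nonneg (hC0 t') (norm_nonneg d)) (le_max_right _ _)
      _ = (C t' * ‖d‖) * V := by rw [hV, Finset.mul_sum]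
  have hCt'κ : C t' ≤ κ := hCκ t' (Finset.mem_powerset.mpr ht's)
  by_cases hd0 : ‖d‖ = 0
  · rw [hd0] at hdist
    calc Metric.infDist z P ≤ 0 := hdist
      _ ≤ κ * V := mul_nonneg hκ0 hV0
  · have hdpos : 0 < ‖d‖ := lt_of_le_of_ne (norm_nonneg d) (Ne.symm hd0)
    have : ‖d‖ ≤ C t' * V := by nlinarith
    calc Metric.infDist z P ≤ ‖d‖ := hdist
      _ ≤ C t' * V := this
      _ ≤ κ * V := mul_le_mul_of_nonneg_right hCt'κ hV0

/-! ### Lasso specific lemmas -/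

lemma euclid_inner {n : ℕ} (v u : EuclideanSpace ℝ (Fin n)) :
    (inner ℝ v u : ℝ) = ∑ j, v j * u j := by
  simp [PiLp.inner_apply, RCLike.inner_apply, conj_trivial]
  exact Finset.sum_congr rfl fun _ _ => mul_comm _ _

lemma slope_le {w L c t0 : ℝ} (hc : 0 ≤ c) (ht0 : 0 < t0)
    (h : ∀ t : ℝ, 0 < t → t < t0 → w ≤ L + c * t) : w ≤ L := by
  apply le_of_forall_pos_le_add
  intro ε hε
  set t := min (t0/2) (ε/(c+1)) with htdef
  have htpos : 0 < t := lt_min (by linarith) (by positivity)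
  have htlt : t < t0 := lt_of_le_of_lt (min_le_left _ _) (by linarith)
  have h1 := h t htpos htlt
  have h3 : t ≤ ε/(c+1) := min_le_right _ _
  have h5 : c * t ≤ c * (ε/(c+1)) := mul_le_mul_of_nonneg_left h3 hc
  have h4 : c * (ε/(c+1)) ≤ ε := by
    have hd : c / (c+1) ≤ 1 := by
      rw [div_le_one (by linarith)]; linarith
    calc c * (ε/(c+1)) = (c/(c+1)) * ε := by ring
      _ ≤ 1 * ε := mul_le_mul_of_nonneg_right hd hε.le
      _ = ε := one_mul ε
  linarith

lemma scalar_forward {lam c w xj : ℝ} (hlam : 0 < lam) (hc : 0 ≤ c)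
    (H : ∀ t : ℝ, w * t ≤ c/2 * t^2 + lam * (|xj + t| - |xj|)) :
    |w| ≤ lam ∧ w * xj = lam * |xj| := by
  have habs : ∀ t : ℝ, |xj + t| - |xj| ≤ |t| := fun t => by
    have := abs_add_le xj t; linarith
  have hwle : w ≤ lam := by
    apply slope_le (by positivity : (0:ℝ) ≤ c/2) one_pos
    intro t ht _
    have h1 := H t
    have h2 : |xj + t| - |xj| ≤ t := by
      have := habs t; rw [abs_of_pos ht] at this; linarith
    have h3 : w * t ≤ c/2 * t^2 + lam * t := by nlinarith
    by_contra hcon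
    push_neg at hcon
    have : (lam + c/2 * t) * t < w * t := mul_lt_mul_of_pos_right hcon ht
    nlinarith
  have hwge : -w ≤ lam := by
    apply slope_le (by positivity : (0:ℝ) ≤ c/2) one_pos
    intro t ht _
    have h1 := H (-t)
    have h2 : |xj + -t| - |xj| ≤ t := by
      have := habs (-t); rw [abs_neg, abs_of_pos ht] at this; linarith
    have h3 : w * (-t) ≤ c/2 * t^2 + lam * t := by nlinarith
    by_contra hcon
    push_neg at hcon
    have : (lam + c/2 * t) * t < (-w) * t := mul_lt_mul_of_pos_right hcon ht
    nlinarith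
  refine ⟨abs_le.mpr ⟨by linarith, hwle⟩, ?_⟩
  rcases lt_trichotomy xj 0 with hx | hx | hx
  · -- xj < 0 : w = -lam
    have hwub : w ≤ -lam := by
      have : lam ≤ -w := by
        apply slope_le (by positivity : (0:ℝ) ≤ c/2) (neg_pos.mpr hx)
        intro t ht htlt
        have h1 := H t
        have h2 : |xj + t| - |xj| = -t := by
          rw [abs_of_neg hx, abs_of_neg (by linarith : xj + t < 0)]; ring
        rw [h2] at h1
        by_contra hcon
        push_neg at hcon
        have : (-w + c/2 * t) * t < lam * t := mul_lt_mul_of_pos_right hcon ht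
        nlinarith
      linarith
    have hw : w = -lam := le_antisymm hwub (by linarith)
    rw [hw, abs_of_neg hx]; ring
  · rw [hx]; simp
  · -- xj > 0 : w = lam
    have hwlb : lam ≤ w := by
      apply slope_le (by positivity : (0:ℝ) ≤ c/2) hx
      intro t ht htlt
      have h1 := H (-t)
      have h2 : |xj + -t| - |xj| = -t := by
        rw [abs_of_pos hx, abs_of_pos (by linarith : 0 < xj + -t)]; ring
      rw [h2] at h1
      by_contra hcon
      push_neg at hcon
      have : (w + c/2 * t) * t < lam * t := mul_lt_mul_of_pos_right hcon ht
      nlinarith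
    have hw : w = lam := le_antisymm hwle hwlb
    rw [hw, abs_of_pos hx]


def lassoGrad (m n : ℕ) (A : Matrix (Fin m) (Fin n) ℝ) (b : Fin m → ℝ)
    (x : EuclideanSpace ℝ (Fin n)) (j : Fin n) : ℝ :=
  ∑ i, A i j * ((∑ k, A i k * x k) - b i)

lemma lassoObj_expand (m n : ℕ) (A : Matrix (Fin m) (Fin n) ℝ) (b : Fin m → ℝ) (lam : ℝ)
    (x y : EuclideanSpace ℝ (Fin n)) :
    lassoObj m n A b lam (x + y) = lassoObj m n A b lam x
      + ∑ j, lassoGrad m n A b x j * y j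
      + (1/2) * ∑ i, (∑ j, A i j * y j)^2
      + lam * (∑ j, (|x j + y j| - |x j|)) := by
  have hcoord : ∀ j, (x + y) j = x j + y j := fun j => rfl
  unfold lassoObj lassoGrad
  have h1 : ∀ i : Fin m, (∑ j, A i j * (x + y) j) - b i
      = ((∑ j, A i j * x j) - b i) + (∑ j, A i j * y j) := by
    intro i
    rw [Finset.sum_congr rfl (fun j (_ : j ∈ Finset.univ) => by rw [hcoord j, mul_add]),
      Finset.sum_add_distrib]
    ring
  have h2 : ∑ i, ((∑ j, A i j * (x + y) j) - b i)^2
      = ∑ i, (((∑ j, A i j * x j) - b i)^2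
        + 2*(((∑ k, A i k * x k) - b i) * (∑ j, A i j * y j)) + (∑ j, A i j * y j)^2) := by
    refine Finset.sum_congr rfl (fun i _ => ?_)
    rw [h1 i]; ring
  have h3 : ∑ i, ((∑ k, A i k * x k) - b i) * (∑ j, A i j * y j)
      = ∑ j, (∑ i, A i j * ((∑ k, A i k * x k) - b i)) * y j := by
    calc ∑ i, ((∑ k, A i k * x k) - b i) * (∑ j, A i j * y j)
        = ∑ i, ∑ j, ((∑ k, A i k * x k) - b i) * (A i j * y j) :=
          Finset.sum_congr rfl (fun i _ => Finset.mul_sum _ _ _)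
      _ = ∑ j, ∑ i, ((∑ k, A i k * x k) - b i) * (A i j * y j) := Finset.sum_comm
      _ = ∑ j, (∑ i, A i j * ((∑ k, A i k * x k) - b i)) * y j := by
          refine Finset.sum_congr rfl (fun j _ => ?_)
          rw [Finset.sum_mul]
          exact Finset.sum_congr rfl (fun i _ => by ring)
  have h4 : ∑ j, |(x + y) j| = ∑ j, (|x j| + (|x j + y j| - |x j|)) :=
    Finset.sum_congr rfl (fun j _ => by rw [hcoord j]; ring)
  rw [h2, h4]
  rw [Finset.sum_add_distrib, Finset.sum_add_distrib, Finset.sum_add_distrib]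
  rw [← Finset.mul_sum, h3]
  ring

lemma lasso_subdiff_iff (m n : ℕ) (A : Matrix (Fin m) (Fin n) ℝ) (b : Fin m → ℝ) {lam : ℝ}
    (hlam : 0 < lam) (x v : EuclideanSpace ℝ (Fin n)) :
    v ∈ RSubdiff (lassoObj m n A b lam) x ↔
    ∀ j, |v j - lassoGrad m n A b x j| ≤ lam ∧
      (v j - lassoGrad m n A b x j) * x j = lam * |x j| := by
  constructor
  · intro hv j
    set c : ℝ := ∑ i, (A i j)^2 with hc
    have hc0 : 0 ≤ c := Finset.sum_nonneg fun i _ => sq_nonneg _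
    apply scalar_forward hlam hc0
    intro t
    set y : EuclideanSpace ℝ (Fin n) := t • EuclideanSpace.single j (1:ℝ) with hy
    have hyk : ∀ k, y k = t * (if j = k then 1 else 0) := by
      intro k
      rw [hy]
      by_cases h : j = k
      · subst h; simp [EuclideanSpace.single_apply]
      · simp [EuclideanSpace.single_apply, h, Ne.symm h]
    have esum : ∀ f : Fin n → ℝ, ∑ k, f k * y k = f j * t := by
      intro f
      rw [Finset.sum_congr rfl (fun k (_ : k ∈ Finset.univ) => by
        rw [hyk k, show f k * (t * (if j = k then 1 else 0)) = if j = k then f k * t else 0 from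
          by split <;> ring])]
      rw [Finset.sum_ite_eq Finset.univ j (fun k => f k * t)]
      simp
    have hineq := hv (x + y)
    rw [add_sub_cancel_left, lassoObj_expand m n A b lam x y, euclid_inner] at hineq
    have e1 : ∑ k, v k * y k = v j * t := esum v
    have e2 : ∑ k, lassoGrad m n A b x k * y k = lassoGrad m n A b x j * t :=
      esum (lassoGrad m n A b x)
    have e3 : ∑ i, (∑ k, A i k * y k)^2 = c * t^2 := by
      rw [Finset.sum_congr rfl (fun i (_ : i ∈ Finset.univ) => by
        rw [esum (fun k => A i k), show (A i j * t)^2 = (A i j)^2 * t^2 from by ring])]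
      rw [← Finset.sum_mul]
    have e4 : ∑ k, (|x k + y k| - |x k|) = |x j + t| - |x j| := by
      rw [Finset.sum_congr rfl (fun k (_ : k ∈ Finset.univ) => by
        rw [hyk k, show |x k + t * (if j = k then 1 else 0)| - |x k|
          = if j = k then |x k + t| - |x k| else 0 from by split <;> simp [*]])]
      rw [Finset.sum_ite_eq Finset.univ j (fun k => |x k + t| - |x k|)]
      simp
    rw [e1, e2, e3, e4] at hineq
    nlinarith [hineq]
  · intro hcond u
    set y : EuclideanSpace ℝ (Fin n) := u - x with hy
    have hxy : x + y = u := by rw [hy]; abel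
    rw [← hxy, lassoObj_expand m n A b lam x y, euclid_inner]
    have key : ∀ j, v j * y j
        ≤ lassoGrad m n A b x j * y j + lam * (|x j + y j| - |x j|) := by
      intro j
      obtain ⟨h1, h2⟩ := hcond j
      set w : ℝ := v j - lassoGrad m n A b x j with hw
      have h3 : w * (x j + y j) ≤ lam * |x j + y j| := by
        nlinarith [le_abs_self (w * (x j + y j)), abs_mul w (x j + y j),
          abs_nonneg (x j + y j), mul_le_mul_of_nonneg_right h1 (abs_nonneg (x j + y j))]
      have h4 : w * y j ≤ lam * (|x j + y j| - |x j|) := by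
        have h5 : w * y j = w * (x j + y j) - w * x j := by ring
        rw [h5, h2]
        linarith [h3]
      have h6 : v j * y j = lassoGrad m n A b x j * y j + w * y j := by rw [hw]; ring
      linarith
    have hq : 0 ≤ (1/2 : ℝ) * ∑ i, (∑ j, A i j * y j)^2 := by positivity
    have hs := Finset.sum_le_sum (fun j (_ : j ∈ Finset.univ) => key j)
    rw [Finset.sum_add_distrib, ← Finset.mul_sum] at hs
    linarith [hs, hq]

def lassoX (n : ℕ) (j : Fin n) :
    ((EuclideanSpace ℝ (Fin n)) × (EuclideanSpace ℝ (Fin n))) →ₗ[ℝ] ℝ where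
  toFun z := z.1 j
  map_add' z w := rfl
  map_smul' c z := rfl

@[simp] lemma lassoX_apply (n : ℕ) (j : Fin n) (z) : lassoX n j z = z.1 j := rfl

def lassoPsi (m n : ℕ) (A : Matrix (Fin m) (Fin n) ℝ) (j : Fin n) :
    ((EuclideanSpace ℝ (Fin n)) × (EuclideanSpace ℝ (Fin n))) →ₗ[ℝ] ℝ where
  toFun z := z.2 j - ∑ i, A i j * (∑ k, A i k * z.1 k)
  map_add' z w := by
    have e1 : ∀ k, (z + w).1 k = z.1 k + w.1 k := fun _ => rfl
    have e2 : (z + w).2 j = z.2 j + w.2 j := rfl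
    simp only [e2]
    rw [Finset.sum_congr rfl (fun i (_ : i ∈ Finset.univ) => by
      rw [Finset.sum_congr rfl (fun k (_ : k ∈ Finset.univ) => by rw [e1 k, mul_add]),
        Finset.sum_add_distrib, mul_add])]
    rw [Finset.sum_add_distrib]
    ring
  map_smul' c z := by
    have e1 : ∀ k, (c • z).1 k = c * z.1 k := fun _ => rfl
    have e2 : (c • z).2 j = c * z.2 j := rfl
    simp only [e2, RingHom.id_apply, smul_eq_mul]
    rw [Finset.sum_congr rfl (fun i (_ : i ∈ Finset.univ) => by
      rw [Finset.sum_congr rfl (fun k (_ : k ∈ Finset.univ) => by rw [e1 k]),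
        show ∑ k, A i k * (c * z.1 k) = c * ∑ k, A i k * z.1 k from by
          rw [Finset.mul_sum]; exact Finset.sum_congr rfl (fun k _ => by ring),
        show A i j * (c * ∑ k, A i k * z.1 k) = c * (A i j * ∑ k, A i k * z.1 k) from by ring])]
    rw [← Finset.mul_sum]
    ring

@[simp] lemma lassoPsi_apply (m n : ℕ) (A : Matrix (Fin m) (Fin n) ℝ) (j : Fin n) (z) :
    lassoPsi m n A j z = z.2 j - ∑ i, A i j * (∑ k, A i k * z.1 k) := rfl

def lassoBeta (m n : ℕ) (A : Matrix (Fin m) (Fin n) ℝ) (b : Fin m → ℝ) (j : Fin n) : ℝ :=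
  ∑ i, A i j * b i

lemma lassoW_eq (m n : ℕ) (A : Matrix (Fin m) (Fin n) ℝ) (b : Fin m → ℝ)
    (z : (EuclideanSpace ℝ (Fin n)) × (EuclideanSpace ℝ (Fin n))) (j : Fin n) :
    z.2 j - lassoGrad m n A b z.1 j = lassoPsi m n A j z + lassoBeta m n A b j := by
  unfold lassoGrad lassoBeta
  rw [lassoPsi_apply]
  rw [Finset.sum_congr rfl (fun i (_ : i ∈ Finset.univ) => by rw [mul_sub]),
    Finset.sum_sub_distrib]
  ring

lemma lasso_graph_decomp (m n : ℕ) (A : Matrix (Fin m) (Fin n) ℝ) (b : Fin m → ℝ) {lam : ℝ}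
    (hlam : 0 < lam) :
    ∃ s : (Fin n → Fin 3) →
        Finset ((((EuclideanSpace ℝ (Fin n)) × (EuclideanSpace ℝ (Fin n))) →ₗ[ℝ] ℝ) × ℝ),
      {w : (EuclideanSpace ℝ (Fin n)) × (EuclideanSpace ℝ (Fin n)) |
          w.2 ∈ RSubdiff (lassoObj m n A b lam) w.1}
        = ⋃ σ, {z | ∀ q ∈ s σ, q.1 z ≤ q.2} := by
  classical
  set F : Fin n → Fin 3 →
      Finset ((((EuclideanSpace ℝ (Fin n)) × (EuclideanSpace ℝ (Fin n))) →ₗ[ℝ] ℝ) × ℝ) :=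
    fun j k =>
      if k = 0 then
        {(lassoX n j, 0), (-lassoX n j, 0),
         (lassoPsi m n A j, lam - lassoBeta m n A b j),
         (-lassoPsi m n A j, lam + lassoBeta m n A b j)}
      else if k = 1 then
        {(-lassoX n j, 0),
         (lassoPsi m n A j, lam - lassoBeta m n A b j),
         (-lassoPsi m n A j, -lam + lassoBeta m n A b j)}
      else
        {(lassoX n j, 0),
         (lassoPsi m n A j, -lam - lassoBeta m n A b j),
         (-lassoPsi m n A j, lam + lassoBeta m n A b j)} with hF
  refine ⟨fun σ => Finset.univ.biUnion (fun j => F j (σ j)), ?_⟩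
  have htri : ∀ k : Fin 3, k = 0 ∨ k = 1 ∨ k = 2 := by decide
  ext z
  simp only [Set.mem_setOf_eq, Set.mem_iUnion]
  rw [lasso_subdiff_iff m n A b hlam]
  constructor
  · intro hchar
    refine ⟨fun j => if z.1 j = 0 then 0 else if 0 < z.1 j then 1 else 2, ?_⟩
    intro q hq
    rw [Finset.mem_biUnion] at hq
    obtain ⟨j, -, hq⟩ := hq
    beta_reduce at hq
    obtain ⟨h1, h2⟩ := hchar j
    rw [lassoW_eq] at h1 h2
    rw [abs_le] at h1
    rcases lt_trichotomy (z.1 j) 0 with hx | hx | hx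
    · -- σ j = 2
      have hσj : (if z.1 j = 0 then (0 : Fin 3) else if 0 < z.1 j then 1 else 2) = 2 := by
        rw [if_neg (by linarith), if_neg (by linarith)]
      rw [hσj, hF] at hq
      beta_reduce at hq
      rw [if_neg (by decide), if_neg (by decide)] at hq
      have hW : lassoPsi m n A j z + lassoBeta m n A b j = -lam := by
        have hxabs : |z.1 j| = -(z.1 j) := abs_of_neg hx
        rw [hxabs] at h2
        have hz : (lassoPsi m n A j z + lassoBeta m n A b j + lam) * z.1 j = 0 := by
          nlinarith [h2]
        rcases mul_eq_zero.mp hz with h | h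
        · linarith
        · exact absurd h (by linarith)
      rcases Finset.mem_insert.mp hq with h | hq
      · rw [h]; show z.1 j ≤ (0:ℝ); linarith
      rcases Finset.mem_insert.mp hq with h | hq
      · rw [h]; show lassoPsi m n A j z ≤ -lam - lassoBeta m n A b j; linarith
      rw [Finset.mem_singleton.mp hq]
      show (-(lassoPsi m n A j)) z ≤ lam + lassoBeta m n A b j
      rw [LinearMap.neg_apply]; linarith
    · -- σ j = 0
      have hσj : (if z.1 j = 0 then (0 : Fin 3) else if 0 < z.1 j then 1 else 2) = 0 := by
        rw [if_pos hx]
      rw [hσj, hF] at hq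
      beta_reduce at hq
      rw [if_pos (by decide)] at hq
      rcases Finset.mem_insert.mp hq with h | hq
      · rw [h]; show z.1 j ≤ (0:ℝ); linarith
      rcases Finset.mem_insert.mp hq with h | hq
      · rw [h]
        show (-(lassoX n j)) z ≤ (0:ℝ)
        rw [LinearMap.neg_apply, lassoX_apply]; linarith
      rcases Finset.mem_insert.mp hq with h | hq
      · rw [h]; show lassoPsi m n A j z ≤ lam - lassoBeta m n A b j; linarith [h1.2]
      rw [Finset.mem_singleton.mp hq]
      show (-(lassoPsi m n A j)) z ≤ lam + lassoBeta m n A b j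
      rw [LinearMap.neg_apply]; linarith [h1.1]
    · -- σ j = 1
      have hσj : (if z.1 j = 0 then (0 : Fin 3) else if 0 < z.1 j then 1 else 2) = 1 := by
        rw [if_neg (by linarith), if_pos hx]
      rw [hσj, hF] at hq
      beta_reduce at hq
      rw [if_neg (by decide), if_pos (by decide)] at hq
      have hW : lassoPsi m n A j z + lassoBeta m n A b j = lam := by
        have hxabs : |z.1 j| = z.1 j := abs_of_pos hx
        rw [hxabs] at h2
        have hz : (lassoPsi m n A j z + lassoBeta m n A b j - lam) * z.1 j = 0 := by
          nlinarith [h2]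
        rcases mul_eq_zero.mp hz with h | h
        · linarith
        · exact absurd h (by linarith)
      rcases Finset.mem_insert.mp hq with h | hq
      · rw [h]
        show (-(lassoX n j)) z ≤ (0:ℝ)
        rw [LinearMap.neg_apply, lassoX_apply]; linarith
      rcases Finset.mem_insert.mp hq with h | hq
      · rw [h]; show lassoPsi m n A j z ≤ lam - lassoBeta m n A b j; linarith
      rw [Finset.mem_singleton.mp hq]
      show (-(lassoPsi m n A j)) z ≤ -lam + lassoBeta m n A b j
      rw [LinearMap.neg_apply]; linarith
  · rintro ⟨σ, hσ⟩ j
    have hj : ∀ q ∈ F j (σ j), q.1 z ≤ q.2 := fun q hq =>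
      hσ q (Finset.mem_biUnion.mpr ⟨j, Finset.mem_univ j, hq⟩)
    simp only [lassoW_eq]
    rcases htri (σ j) with hk | hk | hk
    · rw [hk] at hj
      have ha := hj (lassoX n j, 0) (by simp [hF])
      have hb := hj (-lassoX n j, 0) (by simp [hF])
      have hc := hj (lassoPsi m n A j, lam - lassoBeta m n A b j) (by simp [hF])
      have hd := hj (-lassoPsi m n A j, lam + lassoBeta m n A b j) (by simp [hF])
      simp only [lassoX_apply, LinearMap.neg_apply] at ha hb hc hd
      have hx0 : z.1 j = 0 := le_antisymm ha (by linarith)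
      constructor
      · rw [abs_le]; constructor <;> linarith
      · rw [hx0]; simp
    · rw [hk] at hj
      have hb := hj (-lassoX n j, 0) (by simp [hF])
      have hc := hj (lassoPsi m n A j, lam - lassoBeta m n A b j) (by simp [hF])
      have hd := hj (-lassoPsi m n A j, -lam + lassoBeta m n A b j) (by simp [hF])
      simp only [lassoX_apply, LinearMap.neg_apply] at hb hc hd
      have hx0 : 0 ≤ z.1 j := by linarith
      have hW : lassoPsi m n A j z + lassoBeta m n A b j = lam := by linarith
      rw [hW, abs_of_nonneg hx0]
      refine ⟨by rw [abs_of_pos hlam], by ring⟩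
    · rw [hk] at hj
      have ha := hj (lassoX n j, 0) (by simp [hF])
      have hc := hj (lassoPsi m n A j, -lam - lassoBeta m n A b j) (by simp [hF])
      have hd := hj (-lassoPsi m n A j, lam + lassoBeta m n A b j) (by simp [hF])
      simp only [lassoX_apply, LinearMap.neg_apply] at ha hc hd
      have hx0 : z.1 j ≤ 0 := ha
      have hW : lassoPsi m n A j z + lassoBeta m n A b j = -lam := by linarith
      rw [hW, abs_of_nonpos hx0]
      refine ⟨by rw [abs_neg, abs_of_pos hlam], by ring⟩

lemma lasso_min_exists (m n : ℕ) (A : Matrix (Fin m) (Fin n) ℝ) (b : Fin m → ℝ) {lam : ℝ}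
    (hlam : 0 < lam) :
    ∃ x : EuclideanSpace ℝ (Fin n), ∀ u, lassoObj m n A b lam x ≤ lassoObj m n A b lam u := by
  have hcoord : ∀ j : Fin n, Continuous (fun x : EuclideanSpace ℝ (Fin n) => x j) := by
    intro j
    exact (continuous_apply j).comp (PiLp.continuous_ofLp 2 (fun _ : Fin n => ℝ))
  have hcont : Continuous (lassoObj m n A b lam) := by
    unfold lassoObj
    apply Continuous.add
    · apply Continuous.mul continuous_const
      apply continuous_finset_sum
      intro i _
      apply Continuous.pow
      apply Continuous.sub _ continuous_const
      apply continuous_finset_sum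
      intro j _
      exact continuous_const.mul (hcoord j)
    · apply Continuous.mul continuous_const
      apply continuous_finset_sum
      intro j _
      exact (hcoord j).abs
  have hlb : ∀ x : EuclideanSpace ℝ (Fin n), lam * ‖x‖ ≤ lassoObj m n A b lam x := by
    intro x
    have h1 : ‖x‖ ≤ ∑ j, |x j| := by
      rw [EuclideanSpace.norm_eq]
      have h2 : ∑ j, |x j|^2 ≤ (∑ j, |x j|)^2 :=
        Finset.sum_sq_le_sq_sum_of_nonneg (fun j _ => abs_nonneg _)
      calc Real.sqrt (∑ j, |x j|^2) ≤ Real.sqrt ((∑ j, |x j|)^2) := Real.sqrt_le_sqrt h2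
        _ = ∑ j, |x j| := Real.sqrt_sq (Finset.sum_nonneg (fun j _ => abs_nonneg _))
    have hq : 0 ≤ (1/2 : ℝ) * ∑ i, ((∑ j, A i j * x j) - b i)^2 := by positivity
    unfold lassoObj
    nlinarith [mul_le_mul_of_nonneg_left h1 hlam.le]
  have hcoer : Filter.Tendsto (lassoObj m n A b lam) (Filter.cocompact _) Filter.atTop := by
    apply Filter.tendsto_atTop_mono hlb
    exact tendsto_norm_cocompact_atTop.const_mul_atTop hlam
  exact hcont.exists_forall_le hcoer

lemma rsubdiff_closed {E : Type*} [NormedAddCommGroup E] [InnerProductSpace ℝ E]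
    (f : E → ℝ) (x : E) : IsClosed (RSubdiff f x) := by
  have h : RSubdiff f x = ⋂ u, {v : E | f x + (inner ℝ v (u - x) : ℝ) ≤ f u} := by
    ext v; simp [RSubdiff, Set.mem_iInter]
  rw [h]
  exact isClosed_iInter fun u =>
    isClosed_le (continuous_const.add (continuous_id.inner continuous_const)) continuous_const

lemma lasso_subdiff_nonempty (m n : ℕ) (A : Matrix (Fin m) (Fin n) ℝ) (b : Fin m → ℝ) {lam : ℝ}
    (hlam : 0 < lam) (x : EuclideanSpace ℝ (Fin n)) :
    (RSubdiff (lassoObj m n A b lam) x).Nonempty := by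
  classical
  set v : EuclideanSpace ℝ (Fin n) := (WithLp.equiv 2 (Fin n → ℝ)).symm
    (fun j => lassoGrad m n A b x j +
      (if 0 < x j then lam else if x j < 0 then -lam else 0)) with hv
  have hvj : ∀ j, v j = lassoGrad m n A b x j +
      (if 0 < x j then lam else if x j < 0 then -lam else 0) := by
    intro j
    rw [hv]; rfl
  refine ⟨v, ?_⟩
  rw [lasso_subdiff_iff m n A b hlam]
  intro j
  rw [hvj j]
  rcases lt_trichotomy (x j) 0 with hx | hx | hx
  · rw [if_neg (by linarith), if_pos hx]
    constructor
    · rw [show lassoGrad m n A b x j + -lam - lassoGrad m n A b x j = -lam from by ring,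
        abs_neg, abs_of_pos hlam]
    · rw [abs_of_neg hx]; ring
  · rw [if_neg (by linarith), if_neg (by linarith), hx]
    constructor
    · rw [show lassoGrad m n A b x j + 0 - lassoGrad m n A b x j = 0 from by ring, abs_zero]
      linarith
    · simp
  · rw [if_pos hx]
    constructor
    · rw [show lassoGrad m n A b x j + lam - lassoGrad m n A b x j = lam from by ring,
        abs_of_pos hlam]
    · rw [abs_of_pos hx]; ring

set_option maxHeartbeats 1000000 in
theorem lasso_subdifferential_polyhedral_and_error_bound
    (m n : ℕ) (A : Matrix (Fin m) (Fin n) ℝ) (b : Fin m → ℝ) (lam : ℝ) (hlam : 0 < lam) :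
    (∃ (N : ℕ) (C : Fin N → Set (EuclideanSpace ℝ (Fin n) × EuclideanSpace ℝ (Fin n))),
      (∀ i, IsPolyhedral (C i)) ∧
      {w : EuclideanSpace ℝ (Fin n) × EuclideanSpace ℝ (Fin n) |
        w.2 ∈ RSubdiff (lassoObj m n A b lam) w.1} = ⋃ i, C i) ∧
    {x : EuclideanSpace ℝ (Fin n) | (0 : EuclideanSpace ℝ (Fin n)) ∈
      RSubdiff (lassoObj m n A b lam) x}.Nonempty ∧
    ∃ κ : ℝ, 0 ≤ κ ∧ ∃ ε : ℝ, 0 < ε ∧ ∀ x : EuclideanSpace ℝ (Fin n),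
      EMetric.infEdist 0 (RSubdiff (lassoObj m n A b lam) x) ≤ ENNReal.ofReal ε →
      EMetric.infEdist x {u : EuclideanSpace ℝ (Fin n) | (0 : EuclideanSpace ℝ (Fin n)) ∈
          RSubdiff (lassoObj m n A b lam) u} ≤
        ENNReal.ofReal κ * EMetric.infEdist 0 (RSubdiff (lassoObj m n A b lam) x) := by
  classical
  obtain ⟨s, hs⟩ := lasso_graph_decomp m n A b hlam
  set S : Set (EuclideanSpace ℝ (Fin n)) :=
    {u : EuclideanSpace ℝ (Fin n) | (0 : EuclideanSpace ℝ (Fin n)) ∈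
      RSubdiff (lassoObj m n A b lam) u} with hSdef
  -- Part 2 first: minimizers are nonempty
  have hSne : S.Nonempty := by
    obtain ⟨x0, hx0⟩ := lasso_min_exists m n A b hlam
    refine ⟨x0, ?_⟩
    intro u
    rw [inner_zero_left]
    simpa using hx0 u
  refine ⟨?_, hSne, ?_⟩
  · -- Part 1: polyhedral decomposition
    refine ⟨3^n, fun i => {z | ∀ q ∈ s ((finFunctionFinEquiv (m := 3) (n := n)).symm i),
      q.1 z ≤ q.2}, fun i => ⟨_, rfl⟩, ?_⟩
    rw [hs]
    ext z
    simp only [Set.mem_iUnion, Set.mem_setOf_eq]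
    constructor
    · rintro ⟨σ, hσ⟩
      exact ⟨finFunctionFinEquiv σ, by rwa [Equiv.symm_apply_apply]⟩
    · rintro ⟨i, hi⟩
      exact ⟨(finFunctionFinEquiv (m := 3) (n := n)).symm i, hi⟩
  · -- Part 3: error bound
    set avec : ((((EuclideanSpace ℝ (Fin n)) × (EuclideanSpace ℝ (Fin n))) →ₗ[ℝ] ℝ) × ℝ) →
        EuclideanSpace ℝ (Fin n) :=
      fun q => (InnerProductSpace.toDual ℝ (EuclideanSpace ℝ (Fin n))).symm
        ((q.1.comp (LinearMap.inl ℝ (EuclideanSpace ℝ (Fin n)) (EuclideanSpace ℝ (Fin n)))).toContinuousLinearMap)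
      with havec
    set Mq : ((((EuclideanSpace ℝ (Fin n)) × (EuclideanSpace ℝ (Fin n))) →ₗ[ℝ] ℝ) × ℝ) → ℝ :=
      fun q => ‖(q.1.comp (LinearMap.inr ℝ (EuclideanSpace ℝ (Fin n))
        (EuclideanSpace ℝ (Fin n)))).toContinuousLinearMap‖ with hMq
    have ha : ∀ q (y : EuclideanSpace ℝ (Fin n)), (inner ℝ (avec q) y : ℝ) = q.1 (y, 0) := by
      intro q y
      rw [havec]
      rw [InnerProductSpace.toDual_symm_apply]
      simp [LinearMap.coe_toContinuousLinearMap']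
    have hM : ∀ q (v : EuclideanSpace ℝ (Fin n)), |q.1 (0, v)| ≤ Mq q * ‖v‖ := by
      intro q v
      have := ((q.1.comp (LinearMap.inr ℝ (EuclideanSpace ℝ (Fin n))
        (EuclideanSpace ℝ (Fin n)))).toContinuousLinearMap).le_opNorm v
      simp only [LinearMap.coe_toContinuousLinearMap', LinearMap.coe_comp,
        Function.comp_apply, LinearMap.inr_apply, Real.norm_eq_abs] at this
      exact this
    have hMq0 : ∀ q, 0 ≤ Mq q := fun q => norm_nonneg _
    have hsplit : ∀ (q : ((((EuclideanSpace ℝ (Fin n)) × (EuclideanSpace ℝ (Fin n))) →ₗ[ℝ] ℝ) × ℝ))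
        (x v : EuclideanSpace ℝ (Fin n)), q.1 (x, v) = q.1 (x, 0) + q.1 (0, v) := by
      intro q x v
      rw [← map_add]
      congr 1
      rw [Prod.mk_add_mk, add_zero, zero_add]
    set Z : (Fin n → Fin 3) → Set (EuclideanSpace ℝ (Fin n)) :=
      fun σ => {y | ∀ q ∈ s σ, (inner ℝ (avec q) y : ℝ) ≤ q.2} with hZ
    have hZC : ∀ σ y, y ∈ Z σ ↔ ((y, (0 : EuclideanSpace ℝ (Fin n))) ∈
        {z : (EuclideanSpace ℝ (Fin n)) × (EuclideanSpace ℝ (Fin n)) | ∀ q ∈ s σ, q.1 z ≤ q.2}) := by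
      intro σ y
      simp only [hZ, Set.mem_setOf_eq]
      constructor
      · intro h q hq; rw [← ha]; exact h q hq
      · intro h q hq; rw [ha]; exact h q hq
    have hZS : ∀ σ, Z σ ⊆ S := by
      intro σ y hy
      have h2 : ((y, (0 : EuclideanSpace ℝ (Fin n))) ∈ ⋃ σ',
          {z : (EuclideanSpace ℝ (Fin n)) × (EuclideanSpace ℝ (Fin n)) | ∀ q ∈ s σ', q.1 z ≤ q.2}) :=
        Set.mem_iUnion.mpr ⟨σ, (hZC σ y).mp hy⟩
      rw [← hs] at h2
      exact Set.mem_setOf.mpr h2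
    -- per-pattern constants
    have main : ∀ σ : Fin n → Fin 3, ∃ c : ℝ, 0 ≤ c ∧ ∃ δ : ℝ, 0 < δ ∧
        ∀ x v : EuclideanSpace ℝ (Fin n),
          ((x, v) ∈ {z : (EuclideanSpace ℝ (Fin n)) × (EuclideanSpace ℝ (Fin n)) |
            ∀ q ∈ s σ, q.1 z ≤ q.2}) → ‖v‖ ≤ δ → Metric.infDist x S ≤ c * ‖v‖ := by
      intro σ
      by_cases hZσ : (Z σ).Nonempty
      · obtain ⟨κσ, hκσ0, hκσ⟩ := hoffman (s σ) avec (fun q => q.2) hZσ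
        refine ⟨κσ * ∑ q ∈ s σ, Mq q, mul_nonneg hκσ0 (Finset.sum_nonneg fun q _ => hMq0 q),
          1, one_pos, ?_⟩
        intro x v hxv _
        have hstep : ∀ q ∈ s σ, max ((inner ℝ (avec q) x : ℝ) - q.2) 0 ≤ Mq q * ‖v‖ := by
          intro q hq
          have h1 : q.1 (x, v) ≤ q.2 := hxv q hq
          have h2 : (inner ℝ (avec q) x : ℝ) - q.2 ≤ Mq q * ‖v‖ := by
            rw [ha]
            have h3 := hsplit q x v
            have h4 := abs_le.mp (hM q v)
            linarith
          exact max_le h2 (mul_nonneg (hMq0 q) (norm_nonneg v))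
        calc Metric.infDist x S ≤ Metric.infDist x (Z σ) :=
              Metric.infDist_le_infDist_of_subset (hZS σ) hZσ
          _ ≤ κσ * ∑ q ∈ s σ, max ((inner ℝ (avec q) x : ℝ) - q.2) 0 := hκσ x
          _ ≤ κσ * ∑ q ∈ s σ, Mq q * ‖v‖ :=
              mul_le_mul_of_nonneg_left (Finset.sum_le_sum hstep) hκσ0
          _ = (κσ * ∑ q ∈ s σ, Mq q) * ‖v‖ := by rw [← Finset.sum_mul]; ring
      · have hempty : {y : EuclideanSpace ℝ (Fin n) |
            ∀ q ∈ s σ, (inner ℝ (avec q) y : ℝ) ≤ q.2} = ∅ :=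
          Set.not_nonempty_iff_eq_empty.mp hZσ
        obtain ⟨l, hl0, hlA, hlc⟩ := farkas_infeasible (s σ) avec (fun q => q.2) hempty
        set γ : ℝ := -(∑ q ∈ s σ, l q * q.2) with hγ
        have hγ0 : 0 < γ := by rw [hγ]; linarith
        set SM : ℝ := ∑ q ∈ s σ, l q * Mq q with hSM
        have hSM0 : 0 ≤ SM := Finset.sum_nonneg fun q _ => mul_nonneg (hl0 q) (hMq0 q)
        refine ⟨0, le_rfl, γ / (2 * (SM + 1)), by positivity, ?_⟩
        intro x v hxv hvle
        exfalso
        -- derive SM * ‖v‖ ≥ γ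
        have h1 : ∑ q ∈ s σ, l q * q.1 (x, v) ≤ -γ := by
          rw [hγ, neg_neg]
          exact Finset.sum_le_sum fun q hq =>
            mul_le_mul_of_nonneg_left (hxv q hq) (hl0 q)
        have h2 : ∑ q ∈ s σ, l q * q.1 (x, v)
            = ∑ q ∈ s σ, l q * q.1 (x, 0) + ∑ q ∈ s σ, l q * q.1 (0, v) := by
          rw [← Finset.sum_add_distrib]
          exact Finset.sum_congr rfl fun q _ => by rw [hsplit q x v]; ring
        have h3 : ∑ q ∈ s σ, l q * q.1 (x, 0) = 0 := by
          have h4 : ∑ q ∈ s σ, l q * q.1 (x, 0)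
              = (inner ℝ (∑ q ∈ s σ, l q • avec q) x : ℝ) := by
            rw [sum_inner]
            exact Finset.sum_congr rfl fun q _ => by
              rw [real_inner_smul_left, ha]
          rw [h4, hlA, inner_zero_left]
        have h5 : -(SM * ‖v‖) ≤ ∑ q ∈ s σ, l q * q.1 (0, v) := by
          rw [hSM, Finset.sum_mul, ← Finset.sum_neg_distrib]
          apply Finset.sum_le_sum
          intro q hq
          have h6 := abs_le.mp (hM q v)
          have := mul_le_mul_of_nonneg_left h6.1 (hl0 q)
          nlinarith [hl0 q, h6.1]
        have h7 : γ ≤ SM * ‖v‖ := by linarith [h1, h2.symm.trans_le h1]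
        have h8 : SM * ‖v‖ ≤ (SM + 1) * (γ / (2 * (SM + 1))) := by
          have : SM * ‖v‖ ≤ SM * (γ / (2 * (SM + 1))) :=
            mul_le_mul_of_nonneg_left hvle hSM0
          have h9 : SM * (γ / (2 * (SM + 1))) ≤ (SM + 1) * (γ / (2 * (SM + 1))) :=
            mul_le_mul_of_nonneg_right (by linarith) (by positivity)
          linarith
        have h10 : (SM + 1) * (γ / (2 * (SM + 1))) = γ / 2 := by
          field_simp
        linarith
    choose c hc0 δ hδ0 hprop using main
    have hunivne : (Finset.univ : Finset (Fin n → Fin 3)).Nonempty := Finset.univ_nonempty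
    set κ : ℝ := ∑ σ : Fin n → Fin 3, c σ with hκdef
    have hκ0 : 0 ≤ κ := Finset.sum_nonneg fun σ _ => hc0 σ
    have hcκ : ∀ σ, c σ ≤ κ :=
      fun σ => Finset.single_le_sum (fun σ' _ => hc0 σ') (Finset.mem_univ σ)
    set ε : ℝ := (Finset.univ.inf' hunivne δ) / 2 with hεdef
    have hε0 : 0 < ε := by
      rw [hεdef]
      have : 0 < Finset.univ.inf' hunivne δ := by
        rw [Finset.lt_inf'_iff]
        intro σ _
        exact hδ0 σ
      linarith
    have hεδ : ∀ σ, ε ≤ δ σ := by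
      intro σ
      have h1 : Finset.univ.inf' hunivne δ ≤ δ σ := Finset.inf'_le _ (Finset.mem_univ σ)
      have := hδ0 σ
      rw [hεdef]
      linarith
    refine ⟨κ, hκ0, ε, hε0, ?_⟩
    intro x hx
    have hne := lasso_subdiff_nonempty m n A b hlam x
    have hcl := rsubdiff_closed (lassoObj m n A b lam) x
    have hfin : EMetric.infEdist (0 : EuclideanSpace ℝ (Fin n))
        (RSubdiff (lassoObj m n A b lam) x) ≠ ⊤ := by
      rw [ne_eq, EMetric.infEdist, Metric.infEDist_eq_top_iff]
      exact fun h => Set.not_nonempty_empty (h ▸ hne)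
    set r : ℝ := Metric.infDist (0 : EuclideanSpace ℝ (Fin n))
      (RSubdiff (lassoObj m n A b lam) x) with hrdef
    have hr0 : 0 ≤ r := Metric.infDist_nonneg
    have hofr : ENNReal.ofReal r = EMetric.infEdist (0 : EuclideanSpace ℝ (Fin n))
        (RSubdiff (lassoObj m n A b lam) x) := by
      rw [hrdef]
      exact ENNReal.ofReal_toReal hfin
    have hrε : r ≤ ε := by
      have h1 := ENNReal.toReal_mono (by simp : (ENNReal.ofReal ε) ≠ ⊤) hx
      rwa [ENNReal.toReal_ofReal hε0.le] at h1
    obtain ⟨v, hvmem, hvdist⟩ := hcl.exists_infDist_eq_dist hne 0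
    have hvnorm : ‖v‖ = r := by
      rw [hrdef, hvdist, dist_zero_left]
    have hgraph : ((x, v) : (EuclideanSpace ℝ (Fin n)) × (EuclideanSpace ℝ (Fin n))) ∈
        {w : (EuclideanSpace ℝ (Fin n)) × (EuclideanSpace ℝ (Fin n)) |
          w.2 ∈ RSubdiff (lassoObj m n A b lam) w.1} := hvmem
    rw [hs] at hgraph
    obtain ⟨σ, hσmem⟩ := Set.mem_iUnion.mp hgraph
    have hvδ : ‖v‖ ≤ δ σ := by
      rw [hvnorm]
      exact hrε.trans (hεδ σ)
    have hdistS : Metric.infDist x S ≤ c σ * ‖v‖ := hprop σ x v hσmem hvδ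
    have hdistS2 : Metric.infDist x S ≤ κ * r := by
      rw [← hvnorm]
      calc Metric.infDist x S ≤ c σ * ‖v‖ := hdistS
        _ ≤ κ * ‖v‖ := mul_le_mul_of_nonneg_right (hcκ σ) (norm_nonneg v)
    have hSfin : EMetric.infEdist x S ≠ ⊤ := by
      rw [ne_eq, EMetric.infEdist, Metric.infEDist_eq_top_iff]
      exact fun h => Set.not_nonempty_empty (h ▸ hSne)
    calc EMetric.infEdist x S = ENNReal.ofReal (Metric.infDist x S) :=
          (ENNReal.ofReal_toReal hSfin).symm
      _ ≤ ENNReal.ofReal (κ * r) := ENNReal.ofReal_le_ofReal hdistS2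
      _ = ENNReal.ofReal κ * ENNReal.ofReal r := ENNReal.ofReal_mul hκ0
      _ = ENNReal.ofReal κ * EMetric.infEdist 0 (RSubdiff (lassoObj m n A b lam) x) := by
          rw [hofr]
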